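/- Let u = x_{i_1}···x_{i_d} ∈ M_{n,d,t} and let L_u = {v ∈ M_{n,d,t} : v ≥_lex u}. Then |M_{n,d,t} \ L_u| = Σ_{j=1}^{d} C(a_j, j), where a_j = n - i_{d-j+1} - (j-1)(t-1). -/

import Mathlib

open Finset

/-- The set of `t`-spread "monomials" of degree `d` in variables `x_1,...,x_n`,
identified with `d`-element subsets of `{1,...,n}` with consecutive gaps `≥ t`. -/
def M (n d t : ℕ) : Finset (Finset ℕ) :=
  (Finset.powersetCard d (Finset.Icc 1 n)).filter
    (fun F => ∀ i ∈ F, ∀ j ∈ F, i < j → i + t ≤ j)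

/-- The `τ`-shadow of a family `L ⊆ M n d t`. -/
def shad (τ n d : ℕ) (L : Finset (Finset ℕ)) : Finset (Finset ℕ) :=
  (M n (d + 1) τ).filter (fun G => ∃ F ∈ L, F ⊆ G)

/-- `F >_lex G` : the smallest element of the symmetric difference belongs to `F`. -/
def lexGT (F G : Finset ℕ) : Prop :=
  ∃ k, k ∈ F ∧ k ∉ G ∧ ∀ j < k, (j ∈ F ↔ j ∈ G)

/-- `L` is a `t`-spread lex set in `M n d t` (a lex up-set). -/
def IsLexSet (n d t : ℕ) (L : Finset (Finset ℕ)) : Prop :=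
  L ⊆ M n d t ∧ ∀ u ∈ L, ∀ v ∈ M n d t, lexGT v u → v ∈ L

/-- `L` is a `t`-spread strongly stable set in `M n d t`. -/
def IsSSS (n d t : ℕ) (L : Finset (Finset ℕ)) : Prop :=
  L ⊆ M n d t ∧ ∀ F ∈ L, ∀ j ∈ F, ∀ i < j, i ∉ F →
    insert i (F.erase j) ∈ M n d t → insert i (F.erase j) ∈ L

/-- number of members of `L` with maximum element `= i`. -/
def mEq (i : ℕ) (L : Finset (Finset ℕ)) : ℕ :=
  (L.filter (fun F => i ∈ F ∧ ∀ j ∈ F, j ≤ i)).card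

/-- number of members of `L` with maximum element `≤ i`. -/
def mLe (i : ℕ) (L : Finset (Finset ℕ)) : ℕ :=
  (L.filter (fun F => ∀ j ∈ F, j ≤ i)).card



lemma choose_arith (m t j : ℕ) (ht : 1 ≤ t) :
    Nat.choose (m - j*(t-1)) (j+1) + Nat.choose ((m+1-t) - (j-1)*(t-1)) j
      = Nat.choose (m+1 - j*(t-1)) (j+1) := by
  rcases j with _ | k
  · simp [Nat.choose]
  · have hmul : (k+1)*(t-1) = k*(t-1) + (t-1) := by ring
    have hE : (m+1-t) - (k+1-1)*(t-1) = m - (k+1)*(t-1) := by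
      simp only [Nat.add_sub_cancel]; omega
    rw [hE]
    set q := (k+1)*(t-1) with hq
    rcases le_or_gt q m with h | h
    · have h1 : m + 1 - q = (m - q) + 1 := by omega
      rw [h1, Nat.choose_succ_succ, Nat.add_comm]
    · have h1 : m - q = 0 := by omega
      have h2 : m + 1 - q = 0 := by omega
      rw [h1, h2]
      simp

lemma filter_spread_singleton (t : ℕ) :
    (Finset.filter (fun F => ∀ x ∈ F, ∀ y ∈ F, x < y → x + t ≤ y) ({∅} : Finset (Finset ℕ))).card = 1 := by
  rw [Finset.filter_singleton, if_pos (by intro x hx; simp at hx)]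
  simp

lemma spread_count (t : ℕ) (ht : 1 ≤ t) :
    ∀ m a j : ℕ,
    ((Finset.powersetCard j (Finset.Icc (a+1) (a+m))).filter
      (fun F => ∀ x ∈ F, ∀ y ∈ F, x < y → x + t ≤ y)).card
      = Nat.choose (m - (j-1)*(t-1)) j := by
  intro m
  induction m using Nat.strong_induction_on with
  | _ m IH =>
    intro a j
    rcases m with _ | m
    · rw [show a + 0 = a from rfl, Finset.Icc_eq_empty (by omega)]
      rcases j with _ | j
      · rw [Finset.powersetCard_zero, filter_spread_singleton]
        simp
      · rw [show Finset.powersetCard (j+1) (∅ : Finset ℕ) = ∅ from rfl]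
        simp [Nat.choose_zero_succ]
    · rcases j with _ | j
      · rw [Finset.powersetCard_zero, filter_spread_singleton]
        simp
      · -- main case
        set P : Finset ℕ → Prop := fun F => ∀ x ∈ F, ∀ y ∈ F, x < y → x + t ≤ y with hP
        set b := a + (m+1) with hb
        set T := (Finset.powersetCard (j+1) (Finset.Icc (a+1) (a+(m+1)))).filter P with hT
        have hsplit : (T.filter (fun F => b ∈ F)).card + (T.filter (fun F => b ∉ F)).card = T.card :=
          Finset.card_filter_add_card_filter_not (fun F => b ∈ F)
        have h1 : T.filter (fun F => b ∉ F)
            = (Finset.powersetCard (j+1) (Finset.Icc (a+1) (a+m))).filter P := by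
          ext F
          simp only [hT, Finset.mem_filter, Finset.mem_powersetCard]
          constructor
          · rintro ⟨⟨⟨hsub, hcard⟩, hPF⟩, hbF⟩
            refine ⟨⟨fun x hx => ?_, hcard⟩, hPF⟩
            have h := hsub hx
            rw [Finset.mem_Icc] at h ⊢
            have hxb : x ≠ b := fun h' => hbF (h' ▸ hx)
            omega
          · rintro ⟨⟨hsub, hcard⟩, hPF⟩
            refine ⟨⟨⟨fun x hx => ?_, hcard⟩, hPF⟩, fun hbF => ?_⟩
            · have h := hsub hx
              rw [Finset.mem_Icc] at h ⊢
              omega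
            · have h := hsub hbF
              rw [Finset.mem_Icc] at h
              omega
        have h2 : (T.filter (fun F => b ∈ F)).card
            = ((Finset.powersetCard j (Finset.Icc (a+1) (b - t))).filter P).card := by
          refine Finset.card_bij' (fun F _ => F.erase b) (fun G _ => insert b G) ?_ ?_ ?_ ?_
          · intro F hF
            simp only [hT, Finset.mem_filter, Finset.mem_powersetCard] at hF ⊢
            obtain ⟨⟨⟨hsub, hcard⟩, hPF⟩, hbF⟩ := hF
            refine ⟨⟨fun x hx => ?_, ?_⟩,
              fun x hx y hy hlt => hPF x (Finset.mem_of_mem_erase hx) y (Finset.mem_of_mem_erase hy) hlt⟩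
            · have hxF : x ∈ F := Finset.mem_of_mem_erase hx
              have hxb : x ≠ b := Finset.ne_of_mem_erase hx
              have h := hsub hxF
              rw [Finset.mem_Icc] at h ⊢
              have hxlt : x < b := by omega
              have := hPF x hxF b hbF hxlt
              omega
            · rw [Finset.card_erase_of_mem hbF, hcard]
              omega
          · intro G hG
            simp only [hT, Finset.mem_filter, Finset.mem_powersetCard] at hG ⊢
            obtain ⟨⟨hsub, hcard⟩, hPG⟩ := hG
            have hbG : b ∉ G := by
              intro hc
              have h := hsub hc
              rw [Finset.mem_Icc] at h
              omega
            refine ⟨⟨⟨fun x hx => ?_, ?_⟩, fun x hx y hy hlt => ?_⟩, Finset.mem_insert_self b G⟩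
            · rcases Finset.mem_insert.mp hx with rfl | hxG
              · rw [Finset.mem_Icc]; omega
              · have h := hsub hxG
                rw [Finset.mem_Icc] at h ⊢
                omega
            · rw [Finset.card_insert_of_notMem hbG, hcard]
            · rcases Finset.mem_insert.mp hx with rfl | hxG
              · rcases Finset.mem_insert.mp hy with rfl | hyG
                · omega
                · have h := hsub hyG
                  rw [Finset.mem_Icc] at h
                  omega
              · rcases Finset.mem_insert.mp hy with rfl | hyG
                · have h := hsub hxG
                  rw [Finset.mem_Icc] at h
                  omega
                · exact hPG x hxG y hyG hlt
          · intro F hF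
            simp only [hT, Finset.mem_filter] at hF
            exact Finset.insert_erase hF.2
          · intro G hG
            simp only [Finset.mem_filter, Finset.mem_powersetCard] at hG
            apply Finset.erase_insert
            intro hc
            have h := hG.1.1 hc
            rw [Finset.mem_Icc] at h
            omega
        have h3 : ((Finset.powersetCard j (Finset.Icc (a+1) (b - t))).filter P).card
            = Nat.choose ((m+1-t) - (j-1)*(t-1)) j := by
          rcases le_or_gt t (m+1) with hc | hc
          · have hbt : b - t = a + (m+1-t) := by omega
            rw [hbt, IH (m+1-t) (by omega) a j]
          · have hempty : Finset.Icc (a+1) (b - t) = ∅ := Finset.Icc_eq_empty (by omega)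
            have hmt : m + 1 - t = 0 := by omega
            rw [hempty, hmt]
            rcases j with _ | j
            · rw [Finset.powersetCard_zero, filter_spread_singleton]
              simp
            · rw [show Finset.powersetCard (j+1) (∅ : Finset ℕ) = ∅ from rfl]
              simp [Nat.choose_zero_succ]
        rw [← hsplit, h1, h2, h3, IH m (by omega) a (j+1)]
        simp only [Nat.add_sub_cancel]
        rw [Nat.add_comm]
        exact choose_arith m t j ht

lemma lexGT_irrefl (F : Finset ℕ) : ¬ lexGT F F := by
  rintro ⟨k, hk1, hk2, -⟩
  exact hk2 hk1

lemma lexGT_asymm {F G : Finset ℕ} (h : lexGT F G) : ¬ lexGT G F := by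
  obtain ⟨k, hkF, hkG, hag⟩ := h
  rintro ⟨k', hk'G, hk'F, hag'⟩
  rcases lt_trichotomy k k' with h1 | rfl | h1
  · exact hkG ((hag' k h1).mpr hkF)
  · exact hkG hk'G
  · exact hk'F ((hag k' h1).mpr hk'G)

lemma lexGT_total {F G : Finset ℕ} (h : F ≠ G) : lexGT F G ∨ lexGT G F := by
  classical
  have key : ∀ x, x ∉ (F \ G) ∪ (G \ F) → (x ∈ F ↔ x ∈ G) := by
    intro x hx
    simp only [Finset.mem_union, Finset.mem_sdiff] at hx
    push_neg at hx
    constructor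
    · intro h'; exact hx.1 h'
    · intro h'; exact hx.2 h'
  have hne : ((F \ G) ∪ (G \ F)).Nonempty := by
    rcases Finset.eq_empty_or_nonempty ((F \ G) ∪ (G \ F)) with he | hne
    · exact absurd (Finset.ext fun x => key x (by simp [he])) h
    · exact hne
  set k := ((F \ G) ∪ (G \ F)).min' hne with hk
  have hkmem := Finset.min'_mem ((F \ G) ∪ (G \ F)) hne
  have hag : ∀ j < k, (j ∈ F ↔ j ∈ G) := by
    intro j hj
    apply key
    intro hmem
    exact absurd (Finset.min'_le _ j hmem) (by omega)
  rcases Finset.mem_union.mp hkmem with hk' | hk'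
  · obtain ⟨h1, h2⟩ := Finset.mem_sdiff.mp hk'
    exact Or.inl ⟨k, h1, h2, hag⟩
  · obtain ⟨h1, h2⟩ := Finset.mem_sdiff.mp hk'
    exact Or.inr ⟨k, h1, h2, fun j hj => (hag j hj).symm⟩

open Classical

/-- for `u = x_{i_1}⋯x_{i_d} ∈ M_{n,d,t}` and
`L_u = {v ∈ M_{n,d,t} : v ≥_lex u}`,
`|M_{n,d,t} \ L_u| = Σ_{j=1}^d C(a_j, j)` with `a_j = n - i_{d-j+1} - (j-1)(t-1)`. -/
theorem card_compl_Lu (n d t : ℕ) (ht : 1 ≤ t) (hd : 1 ≤ d)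
    (i : ℕ → ℕ) (hi : ∀ j k, 1 ≤ j → j < k → k ≤ d → i j < i k)
    (u : Finset ℕ) (hu : u = (Finset.Icc 1 d).image i) (huM : u ∈ M n d t) :
    (M n d t \ (M n d t).filter (fun v => v = u ∨ lexGT v u)).card =
      ∑ j ∈ Finset.Icc 1 d, Nat.choose (n - i (d - j + 1) - (j - 1) * (t - 1)) j := by
  classical
  -- unpack membership of u in M
  have huM' := huM
  rw [M, Finset.mem_filter, Finset.mem_powersetCard] at huM'
  obtain ⟨⟨husub, hucard⟩, huspread⟩ := huM'
  -- basic facts about i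
  have hmem_i : ∀ s, 1 ≤ s → s ≤ d → i s ∈ u := by
    intro s h1 h2
    rw [hu]
    exact Finset.mem_image.mpr ⟨s, Finset.mem_Icc.mpr ⟨h1, h2⟩, rfl⟩
  have hmem_u_iff : ∀ x, x ∈ u ↔ ∃ s, 1 ≤ s ∧ s ≤ d ∧ i s = x := by
    intro x
    rw [hu]
    simp only [Finset.mem_image, Finset.mem_Icc]
    constructor
    · rintro ⟨s, ⟨h1, h2⟩, h3⟩; exact ⟨s, h1, h2, h3⟩
    · rintro ⟨s, h1, h2, h3⟩; exact ⟨s, ⟨h1, h2⟩, h3⟩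
  have hi_lt_iff : ∀ r s, 1 ≤ r → r ≤ d → 1 ≤ s → s ≤ d → (i r < i s ↔ r < s) := by
    intro r s hr1 hr2 hs1 hs2
    constructor
    · intro h
      by_contra hc
      push_neg at hc
      rcases eq_or_lt_of_le hc with heq | h'
      · subst heq; exact lt_irrefl _ h
      · exact absurd (hi s r hs1 h' hr2) (by omega)
    · intro h
      exact hi r s hr1 h hs2
  have hin : ∀ s, 1 ≤ s → s ≤ d → 1 ≤ i s ∧ i s ≤ n := by
    intro s h1 h2
    have := husub (hmem_i s h1 h2)
    rwa [Finset.mem_Icc] at this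
  -- Step 1: the complement is the set of v strictly lex-below u
  have hset : M n d t \ (M n d t).filter (fun v => v = u ∨ lexGT v u)
      = (M n d t).filter (fun v => lexGT u v) := by
    rw [← Finset.filter_not]
    apply Finset.filter_congr
    intro v hv
    constructor
    · intro hnot
      push_neg at hnot
      rcases lexGT_total (Ne.symm hnot.1) with h' | h'
      · exact h'
      · exact absurd h' hnot.2
    · intro h'
      rintro (rfl | h'')
      · exact lexGT_irrefl v h'
      · exact lexGT_asymm h' h''
  rw [hset]
  -- Step 2: decompose into classes indexed by s ∈ [1, d]
  have hQ_lex : ∀ s v, 1 ≤ s → s ≤ d →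
      (i s ∉ v ∧ ∀ x < i s, (x ∈ v ↔ x ∈ u)) → lexGT u v :=
    fun s v h1 h2 hq => ⟨i s, hmem_i s h1 h2, hq.1, fun j hj => (hq.2 j hj).symm⟩
  have hbi : (M n d t).filter (fun v => lexGT u v)
      = (Finset.Icc 1 d).biUnion (fun s => (M n d t).filter
          (fun v => i s ∉ v ∧ ∀ x < i s, (x ∈ v ↔ x ∈ u))) := by
    ext v
    simp only [Finset.mem_filter, Finset.mem_biUnion, Finset.mem_Icc]
    constructor
    · rintro ⟨hvM, k, hkU, hkV, hag⟩
      obtain ⟨s, hs1, hs2, rfl⟩ := (hmem_u_iff k).mp hkU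
      exact ⟨s, ⟨hs1, hs2⟩, hvM, hkV, fun x hx => (hag x hx).symm⟩
    · rintro ⟨s, ⟨hs1, hs2⟩, hvM, hq1, hq2⟩
      exact ⟨hvM, hQ_lex s v hs1 hs2 ⟨hq1, hq2⟩⟩
  rw [hbi, Finset.card_biUnion]
  swap
  · -- disjointness
    intro s hs s' hs' hne
    rw [Finset.mem_coe, Finset.mem_Icc] at hs hs'
    have keydisj : ∀ a b, 1 ≤ a → a ≤ d → 1 ≤ b → b ≤ d → a < b → ∀ v,
        v ∈ (M n d t).filter (fun v => i a ∉ v ∧ ∀ x < i a, (x ∈ v ↔ x ∈ u)) →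
        v ∈ (M n d t).filter (fun v => i b ∉ v ∧ ∀ x < i b, (x ∈ v ↔ x ∈ u)) → False := by
      intro a b ha1 ha2 hb1 hb2 hab v hv1 hv2
      rw [Finset.mem_filter] at hv1 hv2
      have hlt : i a < i b := hi a b ha1 hab hb2
      have : i a ∈ v := (hv2.2.2 (i a) hlt).mpr (hmem_i a ha1 ha2)
      exact hv1.2.1 this
    rw [Function.onFun, Finset.disjoint_left]
    intro v hv1 hv2
    rcases lt_or_gt_of_ne hne with h' | h'
    · exact keydisj s s' hs.1 hs.2 hs'.1 hs'.2 h' v hv1 hv2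
    · exact keydisj s' s hs'.1 hs'.2 hs.1 hs.2 h' v hv2 hv1
  -- Step 3: count each class
  have hclass : ∀ s, 1 ≤ s → s ≤ d →
      ((M n d t).filter (fun v => i s ∉ v ∧ ∀ x < i s, (x ∈ v ↔ x ∈ u))).card
        = Nat.choose (n - i s - (d - s)*(t-1)) (d - s + 1) := by
    intro s hs1 hs2
    obtain ⟨his1, hisn⟩ := hin s hs1 hs2
    -- the fixed lower part of u has s - 1 elements
    have himg : u.filter (fun x => x < i s) = (Finset.Icc 1 (s-1)).image i := by
      ext x
      simp only [Finset.mem_filter, Finset.mem_image, Finset.mem_Icc]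
      constructor
      · rintro ⟨hxu, hxlt⟩
        obtain ⟨r, hr1, hr2, rfl⟩ := (hmem_u_iff x).mp hxu
        have := (hi_lt_iff r s hr1 hr2 hs1 hs2).mp hxlt
        exact ⟨r, ⟨hr1, by omega⟩, rfl⟩
      · rintro ⟨r, ⟨hr1, hr2⟩, rfl⟩
        have hrd : r ≤ d := by omega
        refine ⟨(hmem_u_iff (i r)).mpr ⟨r, hr1, hrd, rfl⟩, ?_⟩
        exact hi r s hr1 (by omega) hs2
    have hfixcard : (u.filter (fun x => x < i s)).card = s - 1 := by
      rw [himg, Finset.card_image_of_injOn, Nat.card_Icc]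
      · omega
      · intro r hr r' hr' heq
        simp only [Finset.coe_Icc, Set.mem_Icc] at hr hr'
        by_contra hc
        rcases lt_or_gt_of_ne hc with h' | h'
        · exact absurd heq (Nat.ne_of_lt (hi r r' hr.1 h' (by omega)))
        · exact absurd heq.symm (Nat.ne_of_lt (hi r' r hr'.1 h' (by omega)))
    -- bijection with t-spread subsets of (i s, n]
    have hbij : ((M n d t).filter (fun v => i s ∉ v ∧ ∀ x < i s, (x ∈ v ↔ x ∈ u))).card
        = ((Finset.powersetCard (d - s + 1) (Finset.Icc (i s + 1) n)).filter
            (fun F => ∀ x ∈ F, ∀ y ∈ F, x < y → x + t ≤ y)).card := by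
      refine Finset.card_bij' (fun v _ => v.filter (fun x => i s < x))
        (fun w _ => w ∪ u.filter (fun x => x < i s)) ?_ ?_ ?_ ?_
      · -- forward membership
        intro v hv
        simp only [Finset.mem_filter] at hv
        obtain ⟨hvM, hqs, hqag⟩ := hv
        simp only [M, Finset.mem_filter, Finset.mem_powersetCard] at hvM
        obtain ⟨⟨hvsub, hvcard⟩, hvspread⟩ := hvM
        simp only [Finset.mem_filter, Finset.mem_powersetCard]
        refine ⟨⟨fun x hx => ?_, ?_⟩, fun x hx y hy hlt => ?_⟩
        · rw [Finset.mem_filter] at hx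
          have := hvsub hx.1
          rw [Finset.mem_Icc] at this ⊢
          omega
        · -- cardinality of the upper part
          have hsplit2 : (v.filter (fun x => x < i s)).card
              + (v.filter (fun x => ¬ x < i s)).card = v.card :=
            Finset.card_filter_add_card_filter_not (fun x => x < i s)
          have heq1 : v.filter (fun x => ¬ x < i s) = v.filter (fun x => i s < x) := by
            apply Finset.filter_congr
            intro x hx
            have hxne : x ≠ i s := fun h => hqs (h ▸ hx)
            constructor
            · intro h'; omega
            · intro h'; omega
          have heq2 : v.filter (fun x => x < i s) = u.filter (fun x => x < i s) := by
            ext x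
            simp only [Finset.mem_filter]
            constructor
            · rintro ⟨h1, h2⟩; exact ⟨(hqag x h2).mp h1, h2⟩
            · rintro ⟨h1, h2⟩; exact ⟨(hqag x h2).mpr h1, h2⟩
          rw [heq1, heq2, hfixcard, hvcard] at hsplit2
          omega
        · exact hvspread x hx.1 y hy.1 hlt
      · -- backward membership
        intro w hw
        simp only [Finset.mem_filter, Finset.mem_powersetCard] at hw
        obtain ⟨⟨hwsub, hwcard⟩, hwspread⟩ := hw
        have hwlow : ∀ x ∈ w, i s < x := by
          intro x hx
          have := hwsub hx
          rw [Finset.mem_Icc] at this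
          omega
        have hdisj2 : ∀ x, x ∈ w → x ∈ u.filter (fun y => y < i s) → False := by
          intro x hx hx'
          rw [Finset.mem_filter] at hx'
          exact absurd (hwlow x hx) (by omega)
        simp only [Finset.mem_filter]
        refine ⟨?_, ?_, ?_⟩
        · -- membership in M
          simp only [M, Finset.mem_filter, Finset.mem_powersetCard]
          refine ⟨⟨fun x hx => ?_, ?_⟩, fun x hx y hy hlt => ?_⟩
          · rcases Finset.mem_union.mp hx with h' | h'
            · have := hwsub h'
              rw [Finset.mem_Icc] at this ⊢
              omega
            · rw [Finset.mem_filter] at h'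
              exact husub h'.1
          · rw [Finset.card_union_of_disjoint, hwcard, hfixcard]
            · omega
            · rw [Finset.disjoint_left]
              intro x hx hx'
              exact hdisj2 x hx hx'
          · rcases Finset.mem_union.mp hx with h1 | h1 <;>
              rcases Finset.mem_union.mp hy with h2 | h2
            · exact hwspread x h1 y h2 hlt
            · rw [Finset.mem_filter] at h2
              exact absurd (hwlow x h1) (by omega)
            · rw [Finset.mem_filter] at h1
              have hxis : x + t ≤ i s := huspread x h1.1 (i s) (hmem_i s hs1 hs2) h1.2
              have := hwlow y h2
              omega
            · rw [Finset.mem_filter] at h1 h2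
              exact huspread x h1.1 y h2.1 hlt
        · -- i s ∉ v
          intro hc
          rcases Finset.mem_union.mp hc with h' | h'
          · exact absurd (hwlow _ h') (by omega)
          · rw [Finset.mem_filter] at h'
            omega
        · -- agreement below i s
          intro x hxlt
          constructor
          · intro hx
            rcases Finset.mem_union.mp hx with h' | h'
            · exact absurd (hwlow x h') (by omega)
            · exact (Finset.mem_filter.mp h').1
          · intro hx
            exact Finset.mem_union_right _ (Finset.mem_filter.mpr ⟨hx, hxlt⟩)
      · -- left inverse
        intro v hv
        simp only [Finset.mem_filter] at hv
        obtain ⟨hvM, hqs, hqag⟩ := hv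
        ext x
        simp only [Finset.mem_union, Finset.mem_filter]
        constructor
        · rintro (⟨h1, h2⟩ | ⟨h1, h2⟩)
          · exact h1
          · exact (hqag x h2).mpr h1
        · intro hx
          have hxne : x ≠ i s := fun h => hqs (h ▸ hx)
          rcases lt_or_gt_of_ne hxne with h' | h'
          · exact Or.inr ⟨(hqag x h').mp hx, h'⟩
          · exact Or.inl ⟨hx, h'⟩
      · -- right inverse
        intro w hw
        simp only [Finset.mem_filter, Finset.mem_powersetCard] at hw
        have hwlow : ∀ x ∈ w, i s < x := by
          intro x hx
          have := hw.1.1 hx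
          rw [Finset.mem_Icc] at this
          omega
        ext x
        simp only [Finset.mem_filter, Finset.mem_union]
        constructor
        · rintro ⟨h1 | h1, h2⟩
          · exact h1
          · exact absurd h1.2 (by omega)
        · intro hx
          exact ⟨Or.inl hx, hwlow x hx⟩
    rw [hbij]
    have hIcc : Finset.Icc (i s + 1) n = Finset.Icc (i s + 1) (i s + (n - i s)) := by
      congr 1
      omega
    rw [hIcc]
    have hds : d - s + 1 - 1 = d - s := by omega
    convert spread_count t ht (n - i s) (i s) (d - s + 1) using 2
    exact Finset.filter_congr_decidable _ _ _
    rw [hds]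
  -- Step 4: reindex the sum
  refine Finset.sum_nbij' (fun s => d - s + 1) (fun j => d - j + 1) ?_ ?_ ?_ ?_ ?_
  · intro s hs
    simp only [Finset.mem_Icc] at hs ⊢
    omega
  · intro j hj
    simp only [Finset.mem_Icc] at hj ⊢
    omega
  · intro s hs
    simp only [Finset.mem_Icc] at hs
    show d - (d - s + 1) + 1 = s
    omega
  · intro j hj
    simp only [Finset.mem_Icc] at hj
    show d - (d - j + 1) + 1 = j
    omega
  · intro s hs
    simp only [Finset.mem_Icc] at hs
    rw [hclass s hs.1 hs.2]
    show _ = Nat.choose (n - i (d - (d - s + 1) + 1) - ((d - s + 1) - 1) * (t - 1)) (d - s + 1)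
    have h1 : d - (d - s + 1) + 1 = s := by omega
    have h2 : (d - s + 1) - 1 = d - s := by omega
    rw [h1, h2]
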